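/- Fix a prime p, let K be a finite field extension of ℚ_p (a field equipped with a ℚ_p-algebra structure making it finite dimensional over ℚ_p), and fix n ≥ 1. Then there exists m ≥ 1 such that for every α ∈ ℚ_p: if the image of α in K is an m-th power in K, then α is an n-th power in ℚ_p. -/

import Mathlib

/-!
Proof sketch: let `d = [K : ℚ_p]` and let `w` be an exponent killing all roots of unity
of `K` (the group of roots of unity of `K` is finite: it embeds into `O/p²O` where `O` is
the integral closure of `ℤ_p` in `K`, a finite `ℤ_p`-module, because `1 + p²O` is
torsion-free).  Take `m = n * d * w`.  If `γ ^ m = α` in `K` and `β = N_{K/ℚ_p}(γ)`, then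
`x := γ^d / β` satisfies `x ^ m = 1`, hence `x ^ w = 1`, which yields `α = (β ^ w) ^ n`.
-/

open scoped Classical

section Aux

variable {p : ℕ} [hp : Fact p.Prime] {K : Type*} [Field K] [Algebra ℚ_[p] K]

noncomputable local instance padicAlgebraInt : Algebra ℤ_[p] K :=
  ((algebraMap ℚ_[p] K).comp (algebraMap ℤ_[p] ℚ_[p])).toAlgebra

local instance padicTower : IsScalarTower ℤ_[p] ℚ_[p] K :=
  IsScalarTower.of_algebraMap_eq fun _ => rfl


lemma padic_prime_torsion (z : K) (hz : z ∈ integralClosure ℤ_[p] K) {ℓ : ℕ} (hl : ℓ.Prime)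
    (h : (1 + (p : K) ^ 2 * z) ^ ℓ = 1) : (p : K) ^ 2 * z = 0 := by
  have hι : Function.Injective (algebraMap ℚ_[p] K) := (algebraMap ℚ_[p] K).injective
  haveI : CharZero K := charZero_of_injective_algebraMap hι
  set O := integralClosure ℤ_[p] K with hO
  set a : K := (p : K) ^ 2 * z with ha
  by_contra ha0
  have haO : a ∈ O := by
    exact mul_mem (pow_mem (Subalgebra.natCast_mem O p) 2) hz
  have hl2 : 2 ≤ ℓ := hl.two_le
  set S : K := ∑ k ∈ Finset.range (ℓ - 1), a ^ k * (ℓ.choose (k + 2) : K) with hS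
  have expand : (1 + a) ^ ℓ = 1 + ℓ * a + a ^ 2 * S := by
    rw [add_comm (1 : K) a, add_pow]
    have hcast : ℓ + 1 = (ℓ - 1) + 1 + 1 := by omega
    rw [hcast, Finset.sum_range_succ' _ ((ℓ - 1) + 1),
      Finset.sum_range_succ' _ (ℓ - 1)]
    have hsum : ∀ x ∈ Finset.range (ℓ - 1),
        a ^ (x + 1 + 1) * (1 : K) ^ (ℓ - (x + 1 + 1)) * (ℓ.choose (x + 1 + 1) : K)
          = a ^ 2 * (a ^ x * (ℓ.choose (x + 2) : K)) := by
      intro x _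
      rw [one_pow, mul_one]
      ring
    rw [Finset.sum_congr rfl hsum, ← Finset.mul_sum, hS]
    simp only [pow_zero, Nat.choose_zero_right, Nat.cast_one, one_mul,
      mul_one, one_pow, pow_one]
    push_cast [Nat.choose_one_right]
    ring
  have hzero : a * ((ℓ : K) + a * S) = 0 := by linear_combination h - expand
  rcases mul_eq_zero.mp hzero with h0 | h0
  · exact ha0 h0
  have hSO : S ∈ O := by
    refine Subalgebra.sum_mem _ fun k _ => mul_mem (pow_mem haO k) (Subalgebra.natCast_mem O _)
  have htO : -(z * S) ∈ O := neg_mem (mul_mem hz hSO)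
  have hℓ : (ℓ : K) = (p : K) ^ 2 * (-(z * S)) := by
    linear_combination h0
  -- q = ℓ / p² is integral over ℤ_p, hence in ℤ_p : contradiction with its norm
  have hp0 : ((p : ℚ_[p]))^2 ≠ 0 := pow_ne_zero 2 (Nat.cast_ne_zero.mpr hp.out.ne_zero)
  set q : ℚ_[p] := (ℓ : ℚ_[p]) / (p : ℚ_[p]) ^ 2 with hq
  have hpK0 : ((p : K)) ^ 2 ≠ 0 := pow_ne_zero _ (Nat.cast_ne_zero.mpr hp.out.ne_zero)
  have hqt : algebraMap ℚ_[p] K q = -(z * S) := by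
    rw [hq, map_div₀, map_pow, map_natCast, map_natCast, hℓ]
    exact mul_div_cancel_left₀ _ hpK0
  have hqint : IsIntegral ℤ_[p] q := by
    have h' : IsIntegral ℤ_[p] (algebraMap ℚ_[p] K q) := by rw [hqt]; exact htO
    exact (isIntegral_algebraMap_iff hι).mp h'
  obtain ⟨y, hy⟩ := IsIntegrallyClosed.isIntegral_iff.mp hqint
  have hq1 : ‖q‖ ≤ 1 := by rw [← hy]; exact y.2
  have hnormℓ : (p : ℝ)⁻¹ ≤ ‖(ℓ : ℚ_[p])‖ := by
    by_cases hd : (p : ℤ) ∣ (ℓ : ℤ)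
    · have : ℓ = p := by
        have := (Nat.prime_dvd_prime_iff_eq hp.out hl).mp (Int.ofNat_dvd.mp hd)
        omega
      rw [this]
      rw [Padic.norm_p]
    · have h1 : ‖((ℓ : ℤ) : ℚ_[p])‖ = 1 := by
        have hle : ‖((ℓ : ℤ) : ℚ_[p])‖ ≤ 1 := Padic.norm_int_le_one _
        have hlt := (Padic.norm_intCast_lt_one_iff (p := p) (k := (ℓ : ℤ))).not.mpr hd
        push_neg at hlt
        linarith
      rw [show ((ℓ : ℤ) : ℚ_[p]) = (ℓ : ℚ_[p]) by push_cast; ring] at h1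
      rw [h1]
      have : (1:ℝ) ≤ p := by exact_mod_cast hp.out.one_lt.le
      rw [inv_le_one_iff₀]; right; linarith
  have hppos : (0:ℝ) < p := by exact_mod_cast hp.out.pos
  have hqnorm : ‖q‖ = ‖(ℓ : ℚ_[p])‖ * (p : ℝ) ^ 2 := by
    rw [hq, norm_div, norm_pow, Padic.norm_p]
    field_simp
  have hp2 : (2:ℝ) ≤ p := by exact_mod_cast hp.out.two_le
  have h1 : (p:ℝ)⁻¹ * (p:ℝ)^2 ≤ ‖(ℓ : ℚ_[p])‖ * (p:ℝ)^2 :=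
    mul_le_mul_of_nonneg_right hnormℓ (by positivity)
  have h2 : (p:ℝ)⁻¹ * (p:ℝ)^2 = p := by field_simp
  linarith [h1, h2, hq1, hqnorm, hp2]

lemma padic_pow_rep (z : K) (hz : z ∈ integralClosure ℤ_[p] K) (k : ℕ) :
    ∃ z' ∈ integralClosure ℤ_[p] K, (1 + (p : K) ^ 2 * z) ^ k = 1 + (p : K) ^ 2 * z' := by
  induction k with
  | zero => exact ⟨0, Subalgebra.zero_mem _, by simp⟩
  | succ k ih =>
    obtain ⟨z', hz', hk⟩ := ih
    refine ⟨z' + z + (p : K) ^ 2 * (z' * z), ?_, ?_⟩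
    · exact add_mem (add_mem hz' hz)
        (mul_mem (pow_mem (Subalgebra.natCast_mem _ p) 2) (mul_mem hz' hz))
    · rw [pow_succ, hk]; ring

lemma padic_torsion : ∀ M : ℕ, 1 ≤ M → ∀ z : K, z ∈ integralClosure ℤ_[p] K →
    (1 + (p : K) ^ 2 * z) ^ M = 1 → (p : K) ^ 2 * z = 0 := by
  intro M
  induction M using Nat.strong_induction_on with
  | _ M ih =>
    intro hM z hz h
    rcases eq_or_lt_of_le hM with h1 | h1
    · rw [← h1, pow_one] at h
      linear_combination h
    · obtain ⟨ℓ, hlp, hld⟩ := Nat.exists_prime_and_dvd (n := M) (by omega)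
      obtain ⟨z', hz', hz'eq⟩ := padic_pow_rep z hz (M / ℓ)
      have hu : (1 + (p : K) ^ 2 * z') ^ ℓ = 1 := by
        rw [← hz'eq, ← pow_mul, Nat.div_mul_cancel hld, h]
      have h0 := padic_prime_torsion z' hz' hlp hu
      have hMl : (1 + (p : K) ^ 2 * z) ^ (M / ℓ) = 1 := by rw [hz'eq, h0, add_zero]
      exact ih (M / ℓ) (Nat.div_lt_self (by omega) hlp.one_lt)
        ((Nat.one_le_div_iff hlp.pos).mpr (Nat.le_of_dvd (by omega) hld)) z hz hMl

lemma padic_exists_exponent [FiniteDimensional ℚ_[p] K] :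
    ∃ w : ℕ, 1 ≤ w ∧ ∀ x : K, ∀ M : ℕ, 1 ≤ M → x ^ M = 1 → x ^ w = 1 := by
  classical
  haveI : IsNoetherian ℤ_[p] (integralClosure ℤ_[p] K) :=
    IsIntegralClosure.isNoetherian ℤ_[p] ℚ_[p] K (integralClosure ℤ_[p] K)
  obtain ⟨s, hs⟩ := IsNoetherian.noetherian (⊤ : Submodule ℤ_[p] (integralClosure ℤ_[p] K))
  haveI : NeZero (p ^ 2) := ⟨pow_ne_zero 2 hp.out.ne_zero⟩
  set B := Fintype.card (↥s → ZMod (p ^ 2)) with hB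
  refine ⟨B.factorial, B.factorial_pos, ?_⟩
  intro x M hM hxM
  have hM0 : M ≠ 0 := by omega
  have hx0 : x ≠ 0 := by
    intro h0; rw [h0, zero_pow hM0] at hxM; exact zero_ne_one hxM
  have hxO : x ∈ integralClosure ℤ_[p] K := by
    refine ⟨Polynomial.X ^ M - Polynomial.C 1, Polynomial.monic_X_pow_sub_C 1 hM0, ?_⟩
    simp [hxM]
  have hxM1 : x * x ^ (M - 1) = 1 := by
    rw [← pow_succ', show M - 1 + 1 = M by omega]; exact hxM
  have hxinv : x⁻¹ = x ^ (M - 1) := inv_eq_of_mul_eq_one_right hxM1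
  have hxinvO : x⁻¹ ∈ integralClosure ℤ_[p] K := hxinv ▸ pow_mem hxO _
  have hrep : ∀ i : ℕ, ∃ c : (integralClosure ℤ_[p] K) → ℤ_[p],
      ∑ t ∈ s, c t • t = (⟨x, hxO⟩ : integralClosure ℤ_[p] K) ^ i := by
    intro i
    have hmem : ((⟨x, hxO⟩ : integralClosure ℤ_[p] K) ^ i) ∈
        Submodule.span ℤ_[p] (s : Set (integralClosure ℤ_[p] K)) := by
      rw [hs]; trivial
    obtain ⟨f, -, hf⟩ := Submodule.mem_span_finset.mp hmem
    exact ⟨f, hf⟩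
  choose c hc using hrep
  set F : ℕ → (↥s → ZMod (p ^ 2)) := fun i t => PadicInt.toZModPow 2 (c i t.1) with hF
  have key : ∀ i j : ℕ, i < j → F i = F j → x ^ (j - i) = 1 := by
    intro i j hij hFij
    have hdvd : ∀ t ∈ s, ∃ e : ℤ_[p], c j t - c i t = (p : ℤ_[p]) ^ 2 * e := by
      intro t ht
      have h0 : PadicInt.toZModPow 2 (c j t - c i t) = 0 := by
        rw [map_sub]
        have := congrFun hFij ⟨t, ht⟩
        simp only [hF] at this
        rw [this, sub_self]
      have hker : c j t - c i t ∈ RingHom.ker (PadicInt.toZModPow (p := p) 2) := h0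
      rw [PadicInt.ker_toZModPow] at hker
      obtain ⟨e, he⟩ := Ideal.mem_span_singleton.mp hker
      exact ⟨e, he⟩
    choose! e he using hdvd
    set u : integralClosure ℤ_[p] K := ∑ t ∈ s, e t • t with hu
    have hdiff : (⟨x, hxO⟩ : integralClosure ℤ_[p] K) ^ j - ⟨x, hxO⟩ ^ i
        = ((p : ℤ_[p]) ^ 2) • u := by
      rw [← hc j, ← hc i, ← Finset.sum_sub_distrib, hu, Finset.smul_sum]
      refine Finset.sum_congr rfl fun t ht => ?_
      rw [← sub_smul, he t ht, ← smul_smul]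
    have hdiffK : x ^ j - x ^ i = (p : K) ^ 2 * ((u : K)) := by
      have h1 := congrArg (Subtype.val) hdiff
      push_cast at h1
      rw [h1, Algebra.smul_def, map_pow, map_natCast]
    have hxipow : x ^ (j - i) * x ^ i = x ^ j := by
      rw [← pow_add, show j - i + i = j by omega]
    set z : K := (x⁻¹) ^ i * (u : K) with hz
    have hzO : z ∈ integralClosure ℤ_[p] K := mul_mem (pow_mem hxinvO i) u.2
    have heq : x ^ (j - i) = 1 + (p : K) ^ 2 * z := by
      have hxi0 : x ^ i ≠ 0 := pow_ne_zero _ hx0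
      have hinv : (x⁻¹) ^ i * x ^ i = 1 := by
        rw [inv_pow, inv_mul_cancel₀ hxi0]
      calc x ^ (j - i) = x ^ (j - i) * x ^ i * ((x⁻¹) ^ i) := by
            rw [mul_assoc, mul_comm (x ^ i), hinv, mul_one]
        _ = (x ^ i + (p : K) ^ 2 * (u : K)) * ((x⁻¹) ^ i) := by
            rw [hxipow]
            congr 1
            linear_combination hdiffK
        _ = 1 + (p : K) ^ 2 * z := by
            rw [add_mul, mul_comm (x ^ i), hinv, hz]
            ring
    have h0 := padic_torsion M hM z hzO (by
      rw [← heq, ← pow_mul, mul_comm, pow_mul, hxM, one_pow])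
    rw [heq, h0, add_zero]
  have hpig : ∃ i ∈ Finset.range (B + 1), ∃ j ∈ Finset.range (B + 1), i ≠ j ∧ F i = F j := by
    apply Finset.exists_ne_map_eq_of_card_lt_of_maps_to
    · rw [Finset.card_range, Finset.card_univ]; omega
    · intro a _; exact Finset.mem_univ _
  obtain ⟨i, hi, j, hj, hij, hFij⟩ := hpig
  rw [Finset.mem_range] at hi hj
  have final : ∀ D : ℕ, 0 < D → D ≤ B → x ^ D = 1 → x ^ B.factorial = 1 := by
    intro D hD1 hDB hxD
    obtain ⟨k, hk⟩ := Nat.dvd_factorial hD1 hDB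
    rw [hk, pow_mul, hxD, one_pow]
  rcases hij.lt_or_gt with h | h
  · exact final (j - i) (by omega) (by omega) (key i j h hFij)
  · exact final (i - j) (by omega) (by omega) (key j i h hFij.symm)

end Aux

/-- Let `K` be a finite extension of the `p`-adic field `ℚ_p` and fix `n ≥ 1`.  Then there is
`m ≥ 1` such that every element of `ℚ_p` that is an `m`-th power in `K` is an `n`-th power
in `ℚ_p`. -/
theorem padic_power_descent (p : ℕ) [Fact p.Prime] (K : Type*) [Field K]
    [Algebra ℚ_[p] K] [FiniteDimensional ℚ_[p] K] (n : ℕ) (hn : 1 ≤ n) :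
    ∃ m : ℕ, 1 ≤ m ∧ ∀ α : ℚ_[p],
      (∃ γ : K, γ ^ m = algebraMap ℚ_[p] K α) → ∃ δ : ℚ_[p], δ ^ n = α := by
  obtain ⟨w, hw1, hw⟩ := padic_exists_exponent (p := p) (K := K)
  set d := Module.finrank ℚ_[p] K with hd
  have hd1 : 1 ≤ d := Module.finrank_pos
  refine ⟨n * d * w, by exact show 0 < n*d*w by positivity, ?_⟩
  rintro α ⟨γ, hγ⟩
  by_cases hα : α = 0
  · exact ⟨0, by rw [zero_pow (by omega), hα]⟩
  have hι : Function.Injective (algebraMap ℚ_[p] K) := (algebraMap ℚ_[p] K).injective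
  have hαK : algebraMap ℚ_[p] K α ≠ 0 := fun h => hα (hι (by rw [h, map_zero]))
  have hm0 : n * d * w ≠ 0 := by positivity
  have hd0 : d ≠ 0 := by omega
  set β := Algebra.norm ℚ_[p] γ with hβ
  have hβm : β ^ (n * d * w) = α ^ d := by
    rw [hβ, ← map_pow, hγ, Algebra.norm_algebraMap]
  have hβ0 : β ≠ 0 := by
    intro h0
    apply hα
    have : (0 : ℚ_[p]) = α ^ d := by rw [← hβm, h0, zero_pow hm0]
    exact pow_eq_zero_iff hd0 |>.mp this.symm
  have hβK : algebraMap ℚ_[p] K β ≠ 0 := fun h => hβ0 (hι (by rw [h, map_zero]))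
  set x : K := γ ^ d * (algebraMap ℚ_[p] K β)⁻¹ with hx
  have hx1 : x ^ (n * d * w) = 1 := by
    rw [hx, mul_pow, ← pow_mul, inv_pow, ← map_pow, hβm, map_pow]
    rw [mul_comm d (n * d * w), pow_mul, hγ, ← map_pow]
    rw [map_pow]
    exact mul_inv_cancel₀ (pow_ne_zero _ hαK)
  have hxw : x ^ w = 1 := hw x (n * d * w) (by exact show 0 < n*d*w by positivity) hx1
  have hxnw : x ^ (n * w) = 1 := by rw [mul_comm, pow_mul, hxw, one_pow]
  have key : algebraMap ℚ_[p] K α = algebraMap ℚ_[p] K ((β ^ w) ^ n) := by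
    have : x ^ (n * w) = γ ^ (n * d * w) * ((algebraMap ℚ_[p] K β) ^ (n * w))⁻¹ := by
      rw [hx, mul_pow, ← pow_mul, inv_pow]
      ring_nf
    rw [this, hγ] at hxnw
    have hβKnw : (algebraMap ℚ_[p] K β) ^ (n * w) ≠ 0 := pow_ne_zero _ hβK
    field_simp at hxnw
    rw [hxnw, ← map_pow, ← pow_mul, mul_comm w n]
  exact ⟨β ^ w, (hι key).symm⟩
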